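/- In a finite-state mean-payoff parity game where all states belong to Player 1 (V₂ = ∅), Player 1 has an optimal strategy: for every state q₀ there exists a strategy σ such that inf over plays consistent with σ from q₀ of the payoff equals the value sup_σ' inf of payoff, i.e. the supremum over strategies of the value is attained. -/

import Mathlib

open Filter

/-- A (weighted) game graph with priorities: states are partitioned between
Player 1 (`isP1`) and Player 2, `E` is the edge relation, `w` the edge weights
and `col` the priority function. -/
structure Game (V : Type) where
  isP1 : V → Prop
  E : V → V → Prop
  w : V → V → ℝ
  col : V → ℕ

variable {V : Type}

/-- An infinite play (infinite path in the graph). -/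
def IsPlay (G : Game V) (ρ : ℕ → V) : Prop := ∀ n, G.E (ρ n) (ρ (n + 1))

/-- The set of states occurring infinitely often. -/
def InfOcc (ρ : ℕ → V) : Set V := {v | ∃ᶠ n in atTop, ρ n = v}

/-- The average weight of the first `n` edges of `ρ`. -/
noncomputable def avgW (G : Game V) (ρ : ℕ → V) (n : ℕ) : ℝ :=
  (∑ i ∈ Finset.range n, G.w (ρ i) (ρ (i + 1))) / n

/-- A play is parity-winning if the minimal priority seen infinitely often is even. -/
def ParityWin (G : Game V) (ρ : ℕ → V) : Prop := Even (sInf (G.col '' InfOcc ρ))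

/-- The payoff of a play: the liminf of the average weights if the play is
parity-winning, and `-∞` otherwise. -/
noncomputable def payoff (G : Game V) (ρ : ℕ → V) : EReal :=
  haveI := Classical.dec (ParityWin G ρ)
  if ParityWin G ρ then Filter.liminf (fun n => ((avgW G ρ n : ℝ) : EReal)) atTop else ⊥

/-- A strategy of Player 1: given the past history and the current state
(controlled by Player 1), choose a successor. -/
structure Strat1 (G : Game V) where
  f : List V → V → V
  valid : ∀ h c, G.isP1 c → G.E c (f h c)

/-- A strategy of Player 2. -/
structure Strat2 (G : Game V) where
  f : List V → V → V
  valid : ∀ h c, ¬ G.isP1 c → G.E c (f h c)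

def Memoryless1 {G : Game V} (σ : Strat1 G) : Prop := ∀ h h' c, σ.f h c = σ.f h' c
def Memoryless2 {G : Game V} (τ : Strat2 G) : Prop := ∀ h h' c, τ.f h c = τ.f h' c

/-- A play is consistent with a strategy of Player 1. -/
def Consistent1 (G : Game V) (σ : Strat1 G) (ρ : ℕ → V) : Prop :=
  ∀ n, G.isP1 (ρ n) → ρ (n + 1) = σ.f (List.ofFn fun i : Fin n => ρ i) (ρ n)

/-- A play is consistent with a strategy of Player 2. -/
def Consistent2 (G : Game V) (τ : Strat2 G) (ρ : ℕ → V) : Prop :=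
  ∀ n, ¬ G.isP1 (ρ n) → ρ (n + 1) = τ.f (List.ofFn fun i : Fin n => ρ i) (ρ n)

/-- The value of a Player 1 strategy from `q₀`: the infimum of the payoffs of
consistent plays from `q₀`. -/
noncomputable def val1 (G : Game V) (σ : Strat1 G) (q₀ : V) : EReal :=
  ⨅ ρ : {ρ : ℕ → V // IsPlay G ρ ∧ ρ 0 = q₀ ∧ Consistent1 G σ ρ}, payoff G ρ.val

/-- The value of a Player 2 strategy from `q₀`. -/
noncomputable def val2 (G : Game V) (τ : Strat2 G) (q₀ : V) : EReal :=
  ⨆ ρ : {ρ : ℕ → V // IsPlay G ρ ∧ ρ 0 = q₀ ∧ Consistent2 G τ ρ}, payoff G ρ.val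

/-- The lower value of a state. -/
noncomputable def lowVal (G : Game V) (q₀ : V) : EReal := ⨆ σ : Strat1 G, val1 G σ q₀

/-- The upper value of a state. -/
noncomputable def upVal (G : Game V) (q₀ : V) : EReal := ⨅ τ : Strat2 G, val2 G τ q₀

/-- The Player 1 attractor of a set `S`: the states from which Player 1 can
force a visit to `S`. -/
inductive Attr1 (G : Game V) (S : Set V) : V → Prop
  | base {v} : v ∈ S → Attr1 G S v
  | p1 {v u} : G.isP1 v → G.E v u → Attr1 G S u → Attr1 G S v
  | p2 {v} : ¬ G.isP1 v → (∃ u, G.E v u) → (∀ u, G.E v u → Attr1 G S u) → Attr1 G S v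

/-- The Player 2 attractor of a set `S`. -/
inductive Attr2 (G : Game V) (S : Set V) : V → Prop
  | base {v} : v ∈ S → Attr2 G S v
  | p2 {v u} : ¬ G.isP1 v → G.E v u → Attr2 G S u → Attr2 G S v
  | p1 {v} : G.isP1 v → (∃ u, G.E v u) → (∀ u, G.E v u → Attr2 G S u) → Attr2 G S v

/-- The game restricted to a subarena `T`. -/
def Game.restrict (G : Game V) (T : Set V) : Game T where
  isP1 v := G.isP1 v.val
  E a b := G.E a.val b.val
  w a b := G.w a.val b.val
  col v := G.col v.val

namespace MPP
variable {V : Type}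

/-- The unique play generated by a strategy in a one-player game. -/
noncomputable def playOf (G : Game V) (σ : Strat1 G) (q₀ : V) : ℕ → V
  | 0 => q₀
  | n+1 => σ.f (List.ofFn fun i : Fin n => playOf G σ q₀ i) (playOf G σ q₀ n)

theorem playOf_zero (G : Game V) (σ : Strat1 G) (q₀ : V) : playOf G σ q₀ 0 = q₀ := by
  rw [playOf]

theorem playOf_succ (G : Game V) (σ : Strat1 G) (q₀ : V) (n : ℕ) :
    playOf G σ q₀ (n+1) = σ.f (List.ofFn fun i : Fin n => playOf G σ q₀ i) (playOf G σ q₀ n) := by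
  rw [playOf]

theorem playOf_isPlay (G : Game V) (h1 : ∀ v, G.isP1 v) (σ : Strat1 G) (q₀ : V) :
    IsPlay G (playOf G σ q₀) := fun n => by
  rw [playOf_succ]; exact σ.valid _ _ (h1 _)

theorem playOf_consistent (G : Game V) (σ : Strat1 G) (q₀ : V) :
    Consistent1 G σ (playOf G σ q₀) := fun n _ => playOf_succ G σ q₀ n

theorem consistent_eq_playOf (G : Game V) (h1 : ∀ v, G.isP1 v) (σ : Strat1 G) (q₀ : V)
    (ρ : ℕ → V) (h0 : ρ 0 = q₀) (hc : Consistent1 G σ ρ) : ρ = playOf G σ q₀ := by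
  funext n
  induction n using Nat.strong_induction_on with
  | _ n ih =>
    match n with
    | 0 => rw [playOf_zero]; exact h0
    | n+1 =>
      rw [hc n (h1 _), playOf_succ]
      congr 1
      · rw [List.ofFn_inj]; funext i; exact ih i (Nat.lt_succ_of_lt i.isLt)
      · exact ih n (Nat.lt_succ_self n)

theorem val1_eq_payoff (G : Game V) (h1 : ∀ v, G.isP1 v) (σ : Strat1 G) (q₀ : V) :
    val1 G σ q₀ = payoff G (playOf G σ q₀) := by
  unfold val1
  apply le_antisymm
  · exact iInf_le (fun ρ : {ρ : ℕ → V // IsPlay G ρ ∧ ρ 0 = q₀ ∧ Consistent1 G σ ρ} =>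
      payoff G ρ.val)
      ⟨playOf G σ q₀, playOf_isPlay G h1 σ q₀, playOf_zero G σ q₀, playOf_consistent G σ q₀⟩
  · apply le_iInf
    rintro ⟨ρ, hp, h0, hc⟩
    exact (congrArg (payoff G) (consistent_eq_playOf G h1 σ q₀ ρ h0 hc)).ge

/-- A strategy following a given play. -/
noncomputable def stratOf (G : Game V) (hsucc : ∀ v, ∃ u, G.E v u) (ρ : ℕ → V)
    (hρ : IsPlay G ρ) : Strat1 G where
  f h c := @ite _ ((h = List.ofFn fun i : Fin h.length => ρ i) ∧ c = ρ h.length)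
    (Classical.propDecidable _) (ρ (h.length + 1)) (Classical.choose (hsucc c))
  valid h c _ := by
    split
    · next hh => rw [hh.2]; exact hρ h.length
    · exact Classical.choose_spec (hsucc c)

theorem playOf_stratOf (G : Game V) (h1 : ∀ v, G.isP1 v) (hsucc : ∀ v, ∃ u, G.E v u)
    (ρ : ℕ → V) (hρ : IsPlay G ρ) : playOf G (stratOf G hsucc ρ hρ) (ρ 0) = ρ := by
  symm
  apply consistent_eq_playOf G h1 _ _ _ rfl
  intro n _
  show ρ (n+1) = (stratOf G hsucc ρ hρ).f (List.ofFn fun i : Fin n => ρ i) (ρ n)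
  simp only [stratOf]
  have hL : (List.ofFn fun i : Fin n => ρ i).length = n := List.length_ofFn
  rw [if_pos]
  · rw [hL]
  · refine ⟨?_, by rw [hL]⟩
    apply List.ext_getElem <;> simp

theorem lowVal_eq (G : Game V) (h1 : ∀ v, G.isP1 v) (hsucc : ∀ v, ∃ u, G.E v u) (q₀ : V) :
    lowVal G q₀ = ⨆ ρ : {ρ : ℕ → V // IsPlay G ρ ∧ ρ 0 = q₀}, payoff G ρ.val := by
  unfold lowVal
  apply le_antisymm
  · apply iSup_le; intro σ
    rw [val1_eq_payoff G h1 σ q₀]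
    exact le_iSup_of_le (⟨playOf G σ q₀, playOf_isPlay G h1 σ q₀, playOf_zero G σ q₀⟩ :
      {ρ : ℕ → V // IsPlay G ρ ∧ ρ 0 = q₀}) le_rfl
  · apply iSup_le; rintro ⟨ρ, hρ, h0⟩
    refine le_iSup_of_le (stratOf G hsucc ρ hρ) ?_
    rw [val1_eq_payoff G h1 _ q₀]
    subst h0
    rw [playOf_stratOf G h1 hsucc ρ hρ]

end MPP
namespace MPP
variable {V : Type}

/-- Sum of edge weights along the first `n` steps of `f`. -/
noncomputable def wSum (G : Game V) (f : ℕ → V) (n : ℕ) : ℝ :=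
  ∑ i ∈ Finset.range n, G.w (f i) (f (i+1))

/-- A closed walk of length `len` inside `I`. -/
def IsCW (G : Game V) (I : Set V) (f : ℕ → V) (len : ℕ) : Prop :=
  0 < len ∧ f len = f 0 ∧ (∀ i < len, f i ∈ I) ∧ (∀ i < len, G.E (f i) (f (i+1)))

/-- A walk of length `len` inside `I`. -/
def IsWalk (G : Game V) (I : Set V) (f : ℕ → V) (len : ℕ) : Prop :=
  (∀ i < len, f i ∈ I) ∧ (∀ i < len, G.E (f i) (f (i+1))) ∧ f len ∈ I

theorem shift_isCW (G : Game V) (I : Set V) (f : ℕ → V) (len i j : ℕ)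
    (h : IsCW G I f len) (hij : i < j) (hj : j ≤ len) (hfij : f i = f j) :
    IsCW G I (fun t => f (i + t)) (j - i) := by
  obtain ⟨-, -, hmem, hedge⟩ := h
  refine ⟨by omega, ?_, fun t ht => hmem _ (by omega), fun t ht => ?_⟩
  · show f (i + (j - i)) = f (i + 0)
    rw [show i + (j - i) = j from by omega, show i + 0 = i from by omega, hfij]
  · show G.E (f (i + t)) (f (i + (t + 1)))
    rw [show i + (t + 1) = i + t + 1 from by omega]
    exact hedge _ (by omega)

theorem shift_wSum (G : Game V) (f : ℕ → V) (i j : ℕ) (hij : i ≤ j) :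
    wSum G (fun t => f (i + t)) (j - i) = ∑ t ∈ Finset.Ico i j, G.w (f t) (f (t+1)) := by
  rw [Finset.sum_Ico_eq_sum_range]
  unfold wSum
  refine Finset.sum_congr rfl fun t _ => ?_
  show G.w (f (i + t)) (f (i + t + 1)) = G.w (f (i + t)) (f (i + (t + 1)))
  rw [show i + (t + 1) = i + t + 1 from by omega]

/-- The spliced walk: remove the portion `[i, j)` from `f`. -/
def splice (f : ℕ → V) (i δ : ℕ) : ℕ → V := fun t => if t < i then f t else f (t + δ)

theorem splice_low (f : ℕ → V) (i j : ℕ) (hij : i ≤ j) (hfij : f i = f j) (t : ℕ) (ht : t ≤ i) :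
    splice f i (j - i) t = f t := by
  unfold splice
  rcases lt_or_eq_of_le ht with h | h
  · rw [if_pos h]
  · subst h; rw [if_neg (lt_irrefl _), Nat.add_sub_cancel' hij, hfij]

theorem splice_high (f : ℕ → V) (i δ : ℕ) (t : ℕ) (ht : i ≤ t) :
    splice f i δ t = f (t + δ) := if_neg (by omega)

theorem splice_isCW (G : Game V) (I : Set V) (f : ℕ → V) (len i j : ℕ)
    (h : IsCW G I f len) (hij : i < j) (hj : j < len) (hfij : f i = f j) :
    IsCW G I (splice f i (j - i)) (len - (j - i)) := by
  obtain ⟨hpos, hclosed, hmem, hedge⟩ := h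
  have hil : i ≤ len - (j - i) := by omega
  refine ⟨by omega, ?_, fun t ht => ?_, fun t ht => ?_⟩
  · rw [splice_high f _ _ _ (by omega), splice_low f i j hij.le hfij 0 (Nat.zero_le i),
      show len - (j-i) + (j-i) = len from by omega, hclosed]
  · rcases lt_or_ge t i with h' | h'
    · rw [splice_low f i j hij.le hfij t h'.le]; exact hmem _ (by omega)
    · rw [splice_high f _ _ _ h']; exact hmem _ (by omega)
  · rcases le_or_gt (t+1) i with h' | h'
    · rw [splice_low f i j hij.le hfij t (by omega), splice_low f i j hij.le hfij (t+1) h']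
      exact hedge _ (by omega)
    · rw [splice_high f _ _ _ (by omega), splice_high f _ _ (t+1) (by omega),
        show t + 1 + (j-i) = t + (j-i) + 1 from by omega]
      exact hedge _ (by omega)

theorem splice_wSum (G : Game V) (f : ℕ → V) (len i j : ℕ)
    (hij : i < j) (hj : j < len) (hfij : f i = f j) :
    wSum G (splice f i (j - i)) (len - (j - i)) =
      wSum G f len - wSum G (fun t => f (i + t)) (j - i) := by
  set A : ℕ → ℝ := fun s => G.w (f s) (f (s+1)) with hA
  have h1 : wSum G (splice f i (j-i)) (len - (j-i)) =
      ∑ t ∈ Finset.range i, A t + ∑ t ∈ Finset.Ico i (len - (j-i)), A (t + (j-i)) := by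
    unfold wSum
    rw [Finset.range_eq_Ico, ← Finset.sum_Ico_consecutive _ (Nat.zero_le i) (by omega : i ≤ len - (j-i)),
      ← Finset.range_eq_Ico]
    congr 1
    · refine Finset.sum_congr rfl fun t ht => ?_
      rw [Finset.mem_range] at ht
      rw [splice_low f i j hij.le hfij t ht.le, splice_low f i j hij.le hfij (t+1) (by omega)]
    · refine Finset.sum_congr rfl fun t ht => ?_
      rw [Finset.mem_Ico] at ht
      rw [splice_high f _ _ t ht.1, splice_high f _ _ (t+1) (by omega), hA]
      simp only
      congr 2
      omega
  have h2 : ∑ t ∈ Finset.Ico i (len - (j-i)), A (t + (j-i)) = ∑ t ∈ Finset.Ico j len, A t := by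
    rw [Finset.sum_Ico_eq_sum_range, Finset.sum_Ico_eq_sum_range]
    refine Finset.sum_congr (by congr 1; omega) fun t _ => ?_
    congr 1
    omega
  have h3 : wSum G f len = ∑ t ∈ Finset.range i, A t + ∑ t ∈ Finset.Ico i j, A t
      + ∑ t ∈ Finset.Ico j len, A t := by
    unfold wSum
    rw [Finset.range_eq_Ico, ← Finset.sum_Ico_consecutive A (Nat.zero_le j) hj.le,
      ← Finset.sum_Ico_consecutive A (Nat.zero_le i) hij.le, ← Finset.range_eq_Ico]
  have h4 := shift_wSum G f i j hij.le
  rw [h1, h2, h3, h4]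
  ring

/-- Candidate set: means of short closed walks in `I`. -/
def candSet [Fintype V] (G : Game V) (I : Set V) : Set ℝ :=
  {x | ∃ f len, IsCW G I f len ∧ len ≤ Fintype.card V ∧ x = wSum G f len / len}

theorem candSet_finite [Fintype V] (G : Game V) (I : Set V) : (candSet G I).Finite := by
  classical
  set N := Fintype.card V
  have : candSet G I ⊆ Set.range (fun p : (Fin (N+1) → V) × Fin (N+1) =>
      (∑ i ∈ Finset.range p.2, G.w (p.1 ⟨min i N, by omega⟩) (p.1 ⟨min (i+1) N, by omega⟩)) / p.2) := by
    rintro x ⟨f, len, hcw, hlen, rfl⟩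
    refine ⟨⟨fun i => f i, ⟨len, by omega⟩⟩, ?_⟩
    simp only
    congr 1
    refine Finset.sum_congr rfl fun i hi => ?_
    rw [Finset.mem_range] at hi
    congr 2 <;> simp <;> omega
  exact Set.Finite.subset (Set.finite_range _) this

/-- Every short closed walk exists inside a closed walk. -/
theorem exists_short_cw [Fintype V] (G : Game V) (I : Set V) (f : ℕ → V) (len : ℕ)
    (h : IsCW G I f len) : ∃ g l, IsCW G I g l ∧ l ≤ Fintype.card V := by
  set N := Fintype.card V
  rcases le_or_gt len N with hle | hlt
  · exact ⟨f, len, h, hle⟩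
  · have : ¬ Function.Injective (fun i : Fin (N+1) => f i) := by
      intro hinj
      have := Fintype.card_le_of_injective _ hinj
      simp [N] at this
    rw [Function.not_injective_iff] at this
    obtain ⟨i, j, hfij, hne⟩ := this
    rcases lt_or_gt_of_ne hne with hij | hij
    · exact ⟨_, _, shift_isCW G I f len i j h (by exact_mod_cast hij) (by omega) hfij,
        by omega⟩
    · exact ⟨_, _, shift_isCW G I f len j i h (by exact_mod_cast hij) (by omega) hfij.symm,
        by omega⟩

/-- All closed walks have mean at most the max short-closed-walk mean. -/
theorem cw_bound [Fintype V] (G : Game V) (I : Set V) (m : ℝ)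
    (hm : ∀ x ∈ candSet G I, x ≤ m) :
    ∀ len f, IsCW G I f len → wSum G f len ≤ m * len := by
  intro len
  induction len using Nat.strong_induction_on with
  | _ len ih =>
    intro f hcw
    set N := Fintype.card V
    rcases le_or_gt len N with hle | hlt
    · have hx : wSum G f len / len ∈ candSet G I := ⟨f, len, hcw, hle, rfl⟩
      have hpos : (0:ℝ) < len := by exact_mod_cast hcw.1
      have := hm _ hx
      calc wSum G f len = (wSum G f len / len) * len := by field_simp
      _ ≤ m * len := by apply mul_le_mul_of_nonneg_right this hpos.le
    · have : ¬ Function.Injective (fun i : Fin (N+1) => f i) := by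
        intro hinj
        have := Fintype.card_le_of_injective _ hinj
        simp [N] at this
      rw [Function.not_injective_iff] at this
      obtain ⟨i₀, j₀, hfij₀, hne⟩ := this
      obtain ⟨i, j, hij, hj, hfij⟩ : ∃ i j : ℕ, i < j ∧ j ≤ N ∧ f i = f j := by
        rcases lt_or_gt_of_ne hne with hij | hij
        · exact ⟨i₀, j₀, by exact_mod_cast hij, by omega, hfij₀⟩
        · exact ⟨j₀, i₀, by exact_mod_cast hij, by omega, hfij₀.symm⟩
      have hjlen : j < len := by omega
      have h₁ := shift_isCW G I f len i j ⟨hcw.1, hcw.2.1, hcw.2.2.1, hcw.2.2.2⟩ hij hjlen.le hfij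
      have h₂ := splice_isCW G I f len i j hcw hij hjlen hfij
      have e₁ := ih (j - i) (by omega) _ h₁
      have e₂ := ih (len - (j - i)) (by omega) _ h₂
      have hsum := splice_wSum G f len i j hij hjlen hfij
      have hcast : ((len - (j-i) : ℕ) : ℝ) = (len : ℝ) - ((j - i : ℕ) : ℝ) := by
        have : j - i ≤ len := by omega
        push_cast [this]
        ring
      rw [hsum, hcast] at e₂
      nlinarith [e₁, e₂]

end MPP
namespace MPP
open Filter
variable {V : Type}

theorem infOcc_nonempty [Finite V] (ρ : ℕ → V) : (InfOcc ρ).Nonempty := by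
  by_contra h
  rw [Set.not_nonempty_iff_eq_empty] at h
  have : ∀ v : V, ∀ᶠ n in atTop, ρ n ≠ v := by
    intro v
    have hv : v ∉ InfOcc ρ := by rw [h]; exact Set.notMem_empty v
    exact not_frequently.mp hv
  have := (eventually_all.2 this).exists
  obtain ⟨n, hn⟩ := this
  exact hn (ρ n) rfl

theorem eventually_mem_infOcc [Finite V] (ρ : ℕ → V) :
    ∃ N, ∀ n, N ≤ n → ρ n ∈ InfOcc ρ := by
  have : ∀ v : V, ∀ᶠ n in atTop, v ∉ InfOcc ρ → ρ n ≠ v := by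
    intro v
    by_cases hv : v ∈ InfOcc ρ
    · exact Eventually.of_forall fun n hn => absurd hv hn
    · exact (not_frequently.mp hv).mono fun n hn _ => hn
  have h2 : ∀ᶠ n in atTop, ρ n ∈ InfOcc ρ := by
    filter_upwards [eventually_all.2 this] with n hn
    by_contra hmem
    exact hn (ρ n) hmem rfl
  exact eventually_atTop.mp h2

theorem frequently_ge (ρ : ℕ → V) (v : V) (hv : v ∈ InfOcc ρ) (N : ℕ) :
    ∃ n, N ≤ n ∧ ρ n = v := frequently_atTop.mp hv N

/-- ε-characterization of `≤` in `EReal` against a real. -/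
theorem EReal_le_coe_of_forall (x : EReal) (m : ℝ) (h : ∀ ε : ℝ, 0 < ε → x ≤ ↑(m + ε)) :
    x ≤ (m : EReal) := by
  by_contra hc
  push_neg at hc
  obtain ⟨z, hz1, hz2⟩ := EReal.exists_between_coe_real hc
  have := h (z - m) (by exact_mod_cast sub_pos.2 (by exact_mod_cast hz1))
  rw [show m + (z - m) = z from by ring] at this
  exact absurd (lt_of_le_of_lt this hz2) (lt_irrefl x)

theorem EReal_coe_le_of_forall (x : EReal) (m : ℝ) (h : ∀ ε : ℝ, 0 < ε → ↑(m - ε) ≤ x) :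
    (m : EReal) ≤ x := by
  by_contra hc
  push_neg at hc
  obtain ⟨z, hz1, hz2⟩ := EReal.exists_between_coe_real hc
  have := h (m - z) (by exact_mod_cast sub_pos.2 (by exact_mod_cast hz2))
  rw [show m - (m - z) = z from by ring] at this
  exact absurd (lt_of_lt_of_le hz1 this) (lt_irrefl x)

theorem liminf_le_of_eventually (f : ℕ → ℝ) (b : ℝ) (h : ∀ᶠ n in atTop, f n ≤ b) :
    liminf (fun n => ((f n : ℝ) : EReal)) atTop ≤ (b : EReal) := by
  calc liminf (fun n => ((f n : ℝ) : EReal)) atTop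
      ≤ liminf (fun _ => (b : EReal)) atTop :=
        Filter.liminf_le_liminf (h.mono fun n hn => EReal.coe_le_coe_iff.2 hn)
  _ = (b : EReal) := liminf_const _

theorem le_liminf_of_eventually (f : ℕ → ℝ) (b : ℝ) (h : ∀ᶠ n in atTop, b ≤ f n) :
    (b : EReal) ≤ liminf (fun n => ((f n : ℝ) : EReal)) atTop := by
  calc (b : EReal) = liminf (fun _ => (b : EReal)) atTop := (liminf_const _).symm
  _ ≤ liminf (fun n => ((f n : ℝ) : EReal)) atTop :=
        Filter.liminf_le_liminf (h.mono fun n hn => EReal.coe_le_coe_iff.2 hn)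

theorem eventually_quad (A B ε : ℝ) (hA : 0 ≤ A) (hB : 0 ≤ B) (hε : 0 < ε) (k : ℕ) (hk : 1 ≤ k) :
    ∃ p₀ : ℕ, 1 ≤ p₀ ∧ ∀ p : ℕ, p₀ ≤ p → A + B * p ≤ ε * ((k : ℝ) * p * ((p : ℝ) - 1)) / 2 := by
  refine ⟨⌈2 * (A + B) / ε⌉₊ + 2, by omega, fun p hp => ?_⟩
  have h1 : 2 * (A + B) / ε ≤ (⌈2 * (A + B) / ε⌉₊ : ℝ) := Nat.le_ceil _
  have hp' : (⌈2 * (A + B) / ε⌉₊ : ℝ) + 2 ≤ (p : ℝ) := by exact_mod_cast hp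
  have hq : 2 * (A + B) / ε + 2 ≤ (p : ℝ) := by linarith
  have hq2 : (2:ℝ) ≤ (p:ℝ) := by
    have : (0:ℝ) ≤ 2 * (A + B) / ε := by positivity
    linarith
  have hk' : (1:ℝ) ≤ (k:ℝ) := by exact_mod_cast hk
  have key : 2 * (A + B) ≤ ε * ((p:ℝ) - 2) := by
    rw [div_add' _ _ _ (ne_of_gt hε)] at hq
    calc 2 * (A+B) = (2*(A+B) + 2*ε) - 2*ε := by ring
    _ ≤ ε * (p:ℝ) - 2*ε := by
        have := (div_le_iff₀ hε).mp hq
        linarith [this]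
    _ = ε * ((p:ℝ) - 2) := by ring
  have hABp : A + B * (p:ℝ) ≤ (A + B) * (p:ℝ) := by nlinarith
  have h2 : (A+B) * (p:ℝ) ≤ ε * (p:ℝ) * ((p:ℝ) - 2) / 2 := by nlinarith
  have h3 : ε * (p:ℝ) * ((p:ℝ)-2) / 2 ≤ ε * ((k:ℝ) * (p:ℝ) * ((p:ℝ)-1)) / 2 := by
    have hp0 : (0:ℝ) ≤ (p:ℝ) := Nat.cast_nonneg p
    have e1 : (p:ℝ) * ((p:ℝ)-2) ≤ (p:ℝ) * ((p:ℝ)-1) := by nlinarith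
    have e2 : (p:ℝ) * ((p:ℝ)-1) ≤ (k:ℝ) * ((p:ℝ) * ((p:ℝ)-1)) :=
      le_mul_of_one_le_left (by nlinarith) hk'
    have : (p:ℝ) * ((p:ℝ)-2) ≤ (k:ℝ) * (p:ℝ) * ((p:ℝ)-1) := by nlinarith [e1, e2]
    nlinarith
  linarith

end MPP
namespace MPP
open Filter
variable {V : Type}

section Blocks
variable (len : ℕ → ℕ)

/-- Cumulative start times of blocks. -/
def bt : ℕ → ℕ
  | 0 => 0
  | j+1 => bt j + len j

theorem bt_zero : bt len 0 = 0 := rfl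

theorem bt_succ (j : ℕ) : bt len (j+1) = bt len j + len j := rfl

theorem bt_mono : Monotone (bt len) := by
  apply monotone_nat_of_le_succ
  intro j
  rw [bt_succ]
  omega

theorem le_bt (hpos : ∀ j, 0 < len j) (j : ℕ) : j ≤ bt len j := by
  induction j with
  | zero => simp [bt_zero]
  | succ j ih => have := hpos j; rw [bt_succ]; omega

/-- The block containing time `n`. -/
def bphase (n : ℕ) : ℕ := Nat.findGreatest (fun j => bt len j ≤ n) n

theorem bphase_spec1 (n : ℕ) : bt len (bphase len n) ≤ n := by
  unfold bphase
  exact Nat.findGreatest_spec (P := fun j => bt len j ≤ n) (Nat.zero_le n)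
    (show bt len 0 ≤ n by rw [bt_zero]; omega)

theorem bphase_spec2 (hpos : ∀ j, 0 < len j) (n : ℕ) : n < bt len (bphase len n + 1) := by
  by_contra h
  push_neg at h
  have h1 : bphase len n + 1 ≤ bt len (bphase len n + 1) := le_bt len hpos _
  exact absurd h (Nat.findGreatest_is_greatest (P := fun j => bt len j ≤ n)
    (Nat.lt_succ_self _) (by omega))

theorem bphase_eq (hpos : ∀ j, 0 < len j) (j n : ℕ) (h1 : bt len j ≤ n) (h2 : n < bt len (j+1)) :
    bphase len n = j := by
  have s1 := bphase_spec1 len n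
  have s2 := bphase_spec2 len hpos n
  by_contra hne
  rcases lt_or_gt_of_ne hne with h | h
  · have := bt_mono len (show bphase len n + 1 ≤ j by omega)
    omega
  · have := bt_mono len (show j + 1 ≤ bphase len n by omega)
    omega

theorem le_bphase (hpos : ∀ j, 0 < len j) (j n : ℕ) (h : bt len j ≤ n) : j ≤ bphase len n := by
  by_contra hc
  push_neg at hc
  have := bt_mono len (show bphase len n + 1 ≤ j by omega)
  have s2 := bphase_spec2 len hpos n
  omega

variable (F : ℕ → ℕ → V)

/-- The concatenated run. -/
def brun (n : ℕ) : V := F (bphase len n) (n - bt len (bphase len n))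

theorem brun_eq (hpos : ∀ j, 0 < len j) (j n : ℕ) (h1 : bt len j ≤ n) (h2 : n < bt len (j+1)) :
    brun len F n = F j (n - bt len j) := by
  unfold brun
  rw [bphase_eq len hpos j n h1 h2]

theorem brun_bt_add (hpos : ∀ j, 0 < len j) (j i : ℕ) (hi : i < len j) :
    brun len F (bt len j + i) = F j i := by
  have hbt := bt_succ len j
  rw [brun_eq len F hpos j _ (by omega) (by omega)]
  congr 1
  omega

theorem brun_succ (hpos : ∀ j, 0 < len j) (hmatch : ∀ j, F j (len j) = F (j+1) 0)
    (j n : ℕ) (h1 : bt len j ≤ n) (h2 : n < bt len (j+1)) :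
    brun len F (n + 1) = F j (n - bt len j + 1) := by
  have hbt := bt_succ len j
  rcases lt_or_eq_of_le (Nat.succ_le_of_lt h2) with h | h
  · rw [brun_eq len F hpos j _ (by omega) h]
    congr 1
    omega
  · have hbt2 := bt_succ len (j+1)
    have hp := hpos (j+1)
    rw [show n + 1 = bt len (j+1) from by omega,
      brun_eq len F hpos (j+1) _ le_rfl (by omega)]
    rw [Nat.sub_self, ← hmatch j]
    congr 1
    omega

theorem brun_isPlay (G : Game V) (hpos : ∀ j, 0 < len j)
    (hmatch : ∀ j, F j (len j) = F (j+1) 0)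
    (hedge : ∀ j i, i < len j → G.E (F j i) (F j (i+1))) :
    IsPlay G (brun len F) := by
  intro n
  have h1 : bt len (bphase len n) ≤ n := bphase_spec1 len n
  have h2 : n < bt len (bphase len n + 1) := bphase_spec2 len hpos n
  have hbt := bt_succ len (bphase len n)
  show G.E (F (bphase len n) (n - bt len (bphase len n))) (brun len F (n+1))
  rw [brun_succ len F hpos hmatch (bphase len n) n h1 h2]
  exact hedge _ _ (by omega)

theorem brun_sum (G : Game V) (hpos : ∀ j, 0 < len j)
    (hmatch : ∀ j, F j (len j) = F (j+1) 0) (n : ℕ) :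
    wSum G (brun len F) n = ∑ j ∈ Finset.range (bphase len n), wSum G (F j) (len j)
      + wSum G (F (bphase len n)) (n - bt len (bphase len n)) := by
  induction n with
  | zero =>
    have h0 : bphase len 0 = 0 := by
      apply bphase_eq len hpos 0 0 le_rfl
      rw [bt_succ, bt_zero]
      have := hpos 0
      omega
    simp [h0, wSum, bt_zero]
  | succ n ih =>
    set j := bphase len n with hj
    have h1 : bt len j ≤ n := bphase_spec1 len n
    have h2 : n < bt len (j+1) := bphase_spec2 len hpos n
    have hbt : bt len (j+1) = bt len j + len j := bt_succ len j
    have hterm : G.w (brun len F n) (brun len F (n+1)) =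
        G.w (F j (n - bt len j)) (F j (n - bt len j + 1)) := by
      rw [brun_succ len F hpos hmatch j n h1 h2, brun_eq len F hpos j n h1 h2]
    have hsum_succ : wSum G (brun len F) (n+1) = wSum G (brun len F) n
        + G.w (brun len F n) (brun len F (n+1)) := Finset.sum_range_succ _ n
    rcases lt_or_eq_of_le (Nat.succ_le_of_lt h2) with hlt | heq
    · have hph : bphase len (n+1) = j := bphase_eq len hpos j (n+1) (by omega) hlt
      rw [hsum_succ, ih, hterm, hph]
      rw [show n + 1 - bt len j = (n - bt len j) + 1 from by omega]
      have hx : wSum G (F j) (n - bt len j + 1) = wSum G (F j) (n - bt len j)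
          + G.w (F j (n - bt len j)) (F j (n - bt len j + 1)) := Finset.sum_range_succ _ _
      rw [hx]
      ring
    · have hbt2 := bt_succ len (j+1)
      have hp2 := hpos (j+1)
      have hph : bphase len (n+1) = j + 1 := bphase_eq len hpos (j+1) (n+1) (by omega) (by omega)
      rw [hsum_succ, ih, hterm, hph]
      rw [show n + 1 - bt len (j+1) = 0 from by omega]
      have hlast : n - bt len j + 1 = len j := by omega
      rw [Finset.sum_range_succ]
      have hx : wSum G (F j) (len j) = wSum G (F j) (n - bt len j)
          + G.w (F j (n - bt len j)) (F j (n - bt len j + 1)) := by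
        rw [← hlast]
        exact Finset.sum_range_succ _ _
      rw [hx]
      simp [wSum]
      ring

end Blocks
end MPP
namespace MPP
open Filter
variable {V : Type}

theorem avgW_eq (G : Game V) (ρ : ℕ → V) (n : ℕ) : avgW G ρ n = wSum G ρ n / n := rfl

theorem payoff_le [Fintype V] (G : Game V) (I : Set V) (m W : ℝ)
    (hW : ∀ u v, |G.w u v| ≤ W)
    (hcand : ∀ x ∈ candSet G I, x ≤ m)
    (Lb : ℕ)
    (hconnb : ∀ u v, u ∈ I → v ∈ I →
      ∃ f len, 1 ≤ len ∧ len ≤ Lb ∧ f 0 = u ∧ f len = v ∧ IsWalk G I f len)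
    (ρ : ℕ → V) (hρ : IsPlay G ρ) (hio : InfOcc ρ ⊆ I) :
    payoff G ρ ≤ (m : EReal) := by
  have hW0 : 0 ≤ W := (abs_nonneg _).trans (hW (ρ 0) (ρ 0))
  unfold payoff
  split
  case isFalse => exact bot_le
  case isTrue _ =>
    obtain ⟨Nτ, hNτ⟩ := eventually_mem_infOcc ρ
    have hmem : ∀ i, Nτ ≤ i → ρ i ∈ I := fun i hi => hio (hNτ i hi)
    set C : ℝ := W * Nτ + |m| * ((Nτ:ℝ) + Lb) + W * Lb with hC
    have key : ∀ n, Nτ + 1 ≤ n → avgW G ρ n ≤ m + C / n := by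
      intro n hn
      obtain ⟨f, ℓ, hℓ1, hℓLb, hf0, hfℓ, hfmem, hfedge, -⟩ :=
        hconnb (ρ n) (ρ Nτ) (hmem n (by omega)) (hmem Nτ le_rfl)
      set δ := n - Nτ with hδ
      have hδ1 : 1 ≤ δ := by omega
      set h : ℕ → V := fun t => if t < δ then ρ (Nτ + t) else f (t - δ) with hh
      have val1 : ∀ t, t ≤ δ → h t = ρ (Nτ + t) := by
        intro t ht
        rcases lt_or_eq_of_le ht with h' | h'
        · simp only [hh, if_pos h']
        · subst h'
          simp only [hh, if_neg (lt_irrefl _), Nat.sub_self, hf0]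
          congr 1
          omega
      have val2 : ∀ t, δ ≤ t → h t = f (t - δ) := by
        intro t ht
        simp only [hh, if_neg (by omega : ¬ t < δ)]
      have hcw : IsCW G I h (δ + ℓ) := by
        refine ⟨by omega, ?_, fun t ht => ?_, fun t ht => ?_⟩
        · rw [val2 _ (by omega), val1 0 (by omega)]
          rw [show δ + ℓ - δ = ℓ from by omega, hfℓ]
          congr 1
        · rcases lt_or_ge t δ with h' | h'
          · rw [val1 t h'.le]; exact hmem _ (by omega)
          · rw [val2 t h']; exact hfmem _ (by omega)
        · rcases le_or_gt (t+1) δ with h' | h'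
          · rw [val1 t (by omega), val1 (t+1) h']
            rw [show Nτ + (t+1) = (Nτ + t) + 1 from by omega]
            exact hρ _
          · rw [val2 t (by omega), val2 (t+1) (by omega)]
            rw [show t + 1 - δ = (t - δ) + 1 from by omega]
            exact hfedge _ (by omega)
      have hbound := cw_bound G I m hcand _ h hcw
      have hsplit : wSum G h (δ + ℓ) = (∑ t ∈ Finset.range δ, G.w (ρ (Nτ+t)) (ρ (Nτ+t+1)))
          + ∑ t ∈ Finset.range ℓ, G.w (f t) (f (t+1)) := by
        unfold wSum
        rw [Finset.range_eq_Ico, ← Finset.sum_Ico_consecutive _ (Nat.zero_le δ)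
          (by omega : δ ≤ δ + ℓ), ← Finset.range_eq_Ico]
        congr 1
        · refine Finset.sum_congr rfl fun t ht => ?_
          rw [Finset.mem_range] at ht
          rw [val1 t ht.le, val1 (t+1) (by omega), show Nτ + (t+1) = Nτ + t + 1 from by omega]
        · rw [Finset.sum_Ico_eq_sum_range]
          refine Finset.sum_congr (by congr 1; omega) fun t ht => ?_
          rw [Finset.mem_range] at ht
          rw [val2 _ (by omega), val2 _ (by omega),
            show δ + t - δ = t from by omega, show δ + t + 1 - δ = t + 1 from by omega]
      have hseg : ∑ t ∈ Finset.range δ, G.w (ρ (Nτ+t)) (ρ (Nτ+t+1)) =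
          ∑ t ∈ Finset.Ico Nτ n, G.w (ρ t) (ρ (t+1)) := by
        rw [Finset.sum_Ico_eq_sum_range]
      have htot : wSum G ρ n = (∑ t ∈ Finset.range Nτ, G.w (ρ t) (ρ (t+1)))
          + ∑ t ∈ Finset.Ico Nτ n, G.w (ρ t) (ρ (t+1)) := by
        unfold wSum
        rw [Finset.range_eq_Ico, ← Finset.sum_Ico_consecutive _ (Nat.zero_le Nτ)
          (by omega : Nτ ≤ n), ← Finset.range_eq_Ico]
      have hpre : ∑ t ∈ Finset.range Nτ, G.w (ρ t) (ρ (t+1)) ≤ W * Nτ := by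
        calc ∑ t ∈ Finset.range Nτ, G.w (ρ t) (ρ (t+1)) ≤ ∑ _t ∈ Finset.range Nτ, W :=
          Finset.sum_le_sum fun t _ => (le_abs_self _).trans (hW _ _)
        _ = W * Nτ := by rw [Finset.sum_const, Finset.card_range, nsmul_eq_mul]; ring
      have hret : -(W * ℓ) ≤ ∑ t ∈ Finset.range ℓ, G.w (f t) (f (t+1)) := by
        calc -(W * ℓ) = ∑ _t ∈ Finset.range ℓ, -W := by
              rw [Finset.sum_const, Finset.card_range, nsmul_eq_mul]; ring
        _ ≤ _ := Finset.sum_le_sum fun t _ => neg_le_of_abs_le (hW _ _)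
      have hcastδ : ((δ:ℕ):ℝ) = (n:ℝ) - (Nτ:ℝ) := by
        rw [hδ, Nat.cast_sub (by omega : Nτ ≤ n)]
      have habs : m * (((n:ℝ) - Nτ) + ℓ) ≤ m * n + |m| * ((Nτ:ℝ) + Lb) := by
        have h1 : 0 ≤ |m| - m := sub_nonneg.2 (le_abs_self m)
        have h2 : 0 ≤ |m| + m := by linarith [neg_abs_le m]
        have hl : (ℓ:ℝ) ≤ (Lb:ℝ) := by exact_mod_cast hℓLb
        have hl0 : (0:ℝ) ≤ ℓ := Nat.cast_nonneg _
        have hN0 : (0:ℝ) ≤ Nτ := Nat.cast_nonneg _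
        nlinarith [mul_nonneg h1 hl0, mul_nonneg h2 hN0,
          mul_nonneg (abs_nonneg m) (sub_nonneg.2 hl)]
      have hwn : wSum G ρ n ≤ m * n + C := by
        have hcast2 : ((δ + ℓ : ℕ) : ℝ) = ((n:ℝ) - Nτ) + ℓ := by
          push_cast
          rw [hcastδ]
        rw [hcast2] at hbound
        have hWl : W * ℓ ≤ W * Lb :=
          mul_le_mul_of_nonneg_left (by exact_mod_cast hℓLb) hW0
        rw [htot]
        rw [hsplit, hseg] at hbound
        linarith
      have hn0 : (0:ℝ) < n := by
        have : (1:ℝ) ≤ (n:ℝ) := by exact_mod_cast (by omega : 1 ≤ n)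
        linarith
      rw [avgW_eq]
      have heq : m + C / n = (m * n + C) / n := by field_simp
      rw [heq]
      gcongr
    apply EReal_le_coe_of_forall
    intro ε hε
    obtain ⟨N₁, hN₁⟩ := exists_nat_ge (C / ε)
    have hev : ∀ᶠ n in atTop, avgW G ρ n ≤ m + ε := by
      rw [eventually_atTop]
      refine ⟨max (Nτ+1) (N₁+1), fun n hn => ?_⟩
      have h1 := key n (le_trans (le_max_left _ _) hn)
      have hn1 : (N₁:ℝ) + 1 ≤ (n:ℝ) := by exact_mod_cast le_trans (le_max_right _ _) hn
      have hN0 : (0:ℝ) ≤ N₁ := Nat.cast_nonneg _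
      have hn0 : (0:ℝ) < n := by linarith
      have hCn : C / n ≤ ε := by
        rw [div_le_iff₀ hn0]
        have h2 : C ≤ ε * ((N₁:ℝ)+1) := by
          have := (div_le_iff₀ hε).1 (le_trans hN₁ (by linarith : (N₁:ℝ) ≤ (N₁:ℝ)+1))
          linarith
        nlinarith
      linarith
    exact liminf_le_of_eventually (avgW G ρ) (m+ε) hev

end MPP
namespace MPP
open Filter
variable {V : Type}

set_option maxHeartbeats 2000000 in
theorem exists_optimal_play [Fintype V] (G : Game V) (hsucc : ∀ v, ∃ u, G.E v u) (q₀ : V) :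
    ∃ ρ : {ρ : ℕ → V // IsPlay G ρ ∧ ρ 0 = q₀},
      payoff G ρ.val = ⨆ ρ' : {ρ : ℕ → V // IsPlay G ρ ∧ ρ 0 = q₀}, payoff G ρ'.val := by
  classical
  haveI : Nonempty V := ⟨q₀⟩
  set ρd : ℕ → V := fun n => Nat.rec q₀ (fun _ v => Classical.choose (hsucc v)) n with hρd
  have hρd0 : ρd 0 = q₀ := rfl
  have hρdP : IsPlay G ρd := fun n => Classical.choose_spec (hsucc (ρd n))
  set S := ⨆ ρ' : {ρ : ℕ → V // IsPlay G ρ ∧ ρ 0 = q₀}, payoff G ρ'.val with hS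
  have hle : ∀ ρ' : {ρ : ℕ → V // IsPlay G ρ ∧ ρ 0 = q₀}, payoff G ρ'.val ≤ S :=
    fun ρ' => le_iSup (fun x : {ρ : ℕ → V // IsPlay G ρ ∧ ρ 0 = q₀} => payoff G x.val) ρ'
  rcases eq_bot_or_bot_lt S with hbot | hSbot
  · exact ⟨⟨ρd, hρdP, hρd0⟩, le_antisymm (hle _) (by rw [hbot]; exact bot_le)⟩
  -- the value is not ⊥
  set g : Set V → EReal :=
    fun I => ⨆ ρ' : {x : {ρ : ℕ → V // IsPlay G ρ ∧ ρ 0 = q₀} // InfOcc x.val = I},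
      payoff G ρ'.val.val with hg
  have hSg : S = ⨆ I, g I := by
    apply le_antisymm
    · rw [hS]
      apply iSup_le
      intro ρ'
      have h1 : payoff G ρ'.val ≤ g (InfOcc ρ'.val) := by
        rw [hg]
        exact le_iSup (fun x : {x : {ρ : ℕ → V // IsPlay G ρ ∧ ρ 0 = q₀} //
          InfOcc x.val = InfOcc ρ'.val} => payoff G x.val.val) ⟨ρ', rfl⟩
      exact h1.trans (le_iSup g _)
    · apply iSup_le
      intro I
      rw [hg]
      apply iSup_le
      rintro ⟨ρ', -⟩
      exact hle ρ'
  obtain ⟨I, hImax⟩ := Finite.exists_max g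
  have hgI : g I = S := le_antisymm (by rw [hSg]; exact le_iSup g I) (by rw [hSg]; exact iSup_le hImax)
  have hbotI : ⊥ < g I := by rw [hgI]; exact hSbot
  rw [hg] at hbotI
  obtain ⟨⟨⟨ρ₀, hρ₀P, hρ₀0⟩, hInf⟩, hlt⟩ :=
    lt_iSup_iff.1 hbotI
  simp only at hInf hlt
  have hpw : ParityWin G ρ₀ := by
    by_contra hnpw
    unfold payoff at hlt
    rw [if_neg hnpw] at hlt
    exact lt_irrefl _ hlt
  have hIne : I.Nonempty := hInf ▸ infOcc_nonempty ρ₀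
  obtain ⟨Nτ, hNτm⟩ := eventually_mem_infOcc ρ₀
  have hmemI : ∀ n, Nτ ≤ n → ρ₀ n ∈ I := fun n h => hInf ▸ hNτm n h
  have hconn : ∀ u v, u ∈ I → v ∈ I →
      ∃ f len, 1 ≤ len ∧ f 0 = u ∧ f len = v ∧ IsWalk G I f len := by
    intro u v hu hv
    obtain ⟨p, hp1, hp2⟩ := frequently_ge ρ₀ u (by rw [hInf]; exact hu) Nτ
    obtain ⟨q, hq1, hq2⟩ := frequently_ge ρ₀ v (by rw [hInf]; exact hv) (p+1)
    refine ⟨fun t => ρ₀ (p + t), q - p, by omega, by simpa using hp2,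
      by show ρ₀ (p + (q - p)) = v; rw [show p + (q - p) = q from by omega]; exact hq2,
      fun i _ => hmemI _ (by omega), fun i hi => ?_, ?_⟩
    · show G.E (ρ₀ (p+i)) (ρ₀ (p+(i+1)))
      rw [show p+(i+1) = p+i+1 from by omega]
      exact hρ₀P _
    · show ρ₀ (p + (q - p)) ∈ I
      exact hmemI _ (by omega)
  have hconnb : ∃ Lb : ℕ, ∀ u v, u ∈ I → v ∈ I →
      ∃ f len, 1 ≤ len ∧ len ≤ Lb ∧ f 0 = u ∧ f len = v ∧ IsWalk G I f len := by
    have hch : ∀ p : V × V, ∃ len : ℕ, p.1 ∈ I → p.2 ∈ I →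
        ∃ f, (1 ≤ len ∧ f 0 = p.1 ∧ f len = p.2 ∧ IsWalk G I f len) := by
      intro p
      by_cases h : p.1 ∈ I ∧ p.2 ∈ I
      · obtain ⟨f, len, h1, h2, h3, h4⟩ := hconn p.1 p.2 h.1 h.2
        exact ⟨len, fun _ _ => ⟨f, h1, h2, h3, h4⟩⟩
      · exact ⟨1, fun hu hv => absurd ⟨hu, hv⟩ h⟩
    choose Lf hLf using hch
    refine ⟨Finset.univ.sup Lf, fun u v hu hv => ?_⟩
    obtain ⟨f, h1, h2, h3, h4⟩ := hLf (u, v) hu hv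
    exact ⟨f, Lf (u, v), h1, Finset.le_sup (Finset.mem_univ _), h2, h3, h4⟩
  obtain ⟨Lb, hLb⟩ := hconnb
  obtain ⟨W, hW⟩ : ∃ W : ℝ, ∀ u v, |G.w u v| ≤ W :=
    ⟨Finset.univ.sup' Finset.univ_nonempty (fun p : V × V => |G.w p.1 p.2|),
      fun u v => Finset.le_sup' (fun p : V × V => |G.w p.1 p.2|) (Finset.mem_univ (u, v))⟩
  have hW0 : 0 ≤ W := (abs_nonneg _).trans (hW q₀ q₀)
  -- the candidate set and maximal mean m
  have hcne : (candSet G I).Nonempty := by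
    obtain ⟨a, ha⟩ := hIne
    obtain ⟨f, len, h1, h2, h3, hwk⟩ := hconn a a ha ha
    obtain ⟨g1, l1, hg1, hl1⟩ := exists_short_cw G I f len
      ⟨h1, by rw [h3, h2], hwk.1, hwk.2.1⟩
    exact ⟨_, g1, l1, hg1, hl1, rfl⟩
  set m := sSup (candSet G I) with hm
  have hcub : ∀ x ∈ candSet G I, x ≤ m := fun x hx => le_csSup (candSet_finite G I).bddAbove hx
  obtain ⟨c, k, hc, hkN, hmean⟩ := hcne.csSup_mem (candSet_finite G I)
  have hk0 : 0 < k := hc.1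
  have hck : wSum G c k = m * k := by
    rw [← hm] at hmean
    rw [hmean]
    field_simp
  set a := c 0 with ha
  have haI : a ∈ I := hc.2.2.1 0 hk0
  obtain ⟨vs, hvI, hvcol⟩ : ∃ v, v ∈ I ∧ G.col v = sInf (G.col '' I) := by
    obtain ⟨v, hv, hcol⟩ := Nat.sInf_mem (hIne.image G.col)
    exact ⟨v, hv, hcol⟩
  -- the detour through vs
  obtain ⟨p₁, ℓ₁, hℓ₁, hp₁0, hp₁ℓ, hp₁mem, hp₁edge, hp₁last⟩ := hconn a vs haI hvI
  obtain ⟨p₂, ℓ₂, hℓ₂, hp₂0, hp₂ℓ, hp₂mem, hp₂edge, hp₂last⟩ := hconn vs a hvI haI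
  set L := ℓ₁ + ℓ₂ with hLdef
  set d : ℕ → V := fun t => if t < ℓ₁ then p₁ t else p₂ (t - ℓ₁) with hd
  have dval1 : ∀ t, t ≤ ℓ₁ → d t = p₁ t := by
    intro t ht
    rcases lt_or_eq_of_le ht with h' | h'
    · simp only [hd, if_pos h']
    · subst h'
      simp only [hd, if_neg (lt_irrefl _), Nat.sub_self, hp₂0, hp₁ℓ]
  have dval2 : ∀ t, ℓ₁ ≤ t → d t = p₂ (t - ℓ₁) := by
    intro t ht
    simp only [hd, if_neg (by omega : ¬ t < ℓ₁)]
  have d0 : d 0 = a := by rw [dval1 0 (Nat.zero_le _), hp₁0]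
  have dℓ₁ : d ℓ₁ = vs := by rw [dval2 ℓ₁ le_rfl, Nat.sub_self, hp₂0]
  have dL : d L = a := by
    rw [dval2 L (by omega), show L - ℓ₁ = ℓ₂ from by omega, hp₂ℓ]
  have dmem : ∀ t, t ≤ L → d t ∈ I := by
    intro t ht
    rcases lt_or_ge t ℓ₁ with h' | h'
    · rw [dval1 t h'.le]; exact hp₁mem t h'
    · rw [dval2 t h']
      rcases lt_or_eq_of_le (show t - ℓ₁ ≤ ℓ₂ from by omega) with h'' | h''
      · exact hp₂mem _ h''
      · rw [h'', hp₂ℓ]; exact haI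
  have dedge : ∀ t, t < L → G.E (d t) (d (t+1)) := by
    intro t ht
    rcases le_or_gt (t+1) ℓ₁ with h' | h'
    · rw [dval1 t (by omega), dval1 (t+1) h']
      exact hp₁edge t (by omega)
    · rw [dval2 t (by omega), dval2 (t+1) (by omega),
        show t + 1 - ℓ₁ = (t - ℓ₁) + 1 from by omega]
      exact hp₂edge _ (by omega)
  obtain ⟨T, hT1, hTa⟩ := frequently_ge ρ₀ a (by rw [hInf]; exact haI) 1
  -- the blocks
  set len : ℕ → ℕ := fun j => if j = 0 then T else k*j + L with hlen
  set F : ℕ → ℕ → V := fun j t => if j = 0 then ρ₀ t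
    else (if t < k*j then c (t % k) else d (t - k*j)) with hF
  have hpos : ∀ j, 0 < len j := by
    intro j
    by_cases hj : j = 0
    · simp only [hlen, if_pos hj]; omega
    · simp only [hlen, if_neg hj]; omega
  have hlen0 : len 0 = T := by simp [hlen]
  have hlenS : ∀ j, j ≠ 0 → len j = k*j + L := by intro j hj; simp [hlen, hj]
  have hF0 : ∀ t, F 0 t = ρ₀ t := by intro t; simp [hF]
  have hFc : ∀ j t, j ≠ 0 → t < k*j → F j t = c (t % k) := by
    intro j t hj ht
    simp only [hF, if_neg hj, if_pos ht]
  have hFd : ∀ j t, j ≠ 0 → k*j ≤ t → F j t = d (t - k*j) := by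
    intro j t hj ht
    simp only [hF, if_neg hj, if_neg (show ¬ t < k*j from by omega)]
  have hmodsucc : ∀ i, (i+1) % k = (i % k + 1) % k := by
    intro i
    conv_lhs => rw [show i + 1 = i % k + 1 + k * (i / k) from by
      rw [add_right_comm, Nat.mod_add_div]]
    rw [Nat.add_mul_mod_self_left]
  have hcval : ∀ i, c ((i+1) % k) = c (i % k + 1) := by
    intro i
    have hr : i % k < k := Nat.mod_lt _ hk0
    rcases lt_or_eq_of_le (show i % k + 1 ≤ k from hr) with h' | h'
    · rw [hmodsucc i, Nat.mod_eq_of_lt h']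
    · rw [hmodsucc i, h', Nat.mod_self]
      exact hc.2.1.symm
  have hFc1 : ∀ j i, j ≠ 0 → i + 1 ≤ k*j → F j (i+1) = c (i % k + 1) := by
    intro j i hj hik
    rcases lt_or_eq_of_le hik with h' | h'
    · rw [hFc j (i+1) hj h', hcval]
    · rw [h', hFd j (k*j) hj le_rfl, Nat.sub_self, d0, ha, ← hcval i, h', Nat.mul_mod_right]
  have hmatch : ∀ j, F j (len j) = F (j+1) 0 := by
    intro j
    have h1 : F (j+1) 0 = c 0 := by
      rw [hFc (j+1) 0 (by omega) (Nat.mul_pos hk0 (by omega)), Nat.zero_mod]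
    rcases Nat.eq_zero_or_pos j with hj | hj
    · subst hj
      rw [hlen0, hF0, hTa, h1, ha]
    · rw [hlenS j (by omega), hFd j _ (by omega) (by omega), h1,
        show k*j + L - k*j = L from by omega, dL, ha]
  have hedge : ∀ j i, i < len j → G.E (F j i) (F j (i+1)) := by
    intro j i hi
    rcases Nat.eq_zero_or_pos j with hj | hj
    · subst hj
      rw [hF0, hF0]
      exact hρ₀P i
    · have hj' : j ≠ 0 := by omega
      rw [hlenS j hj'] at hi
      rcases lt_or_ge i (k*j) with h' | h'
      · rw [hFc j i hj' h', hFc1 j i hj' h']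
        exact hc.2.2.2 _ (Nat.mod_lt _ hk0)
      · rw [hFd j i hj' h', hFd j (i+1) hj' (by omega),
          show i + 1 - k*j = (i - k*j) + 1 from by omega]
        exact dedge _ (by omega)
  have hrsP : IsPlay G (brun len F) := brun_isPlay len F G hpos hmatch hedge
  have hbt1 : bt len 1 = T := by rw [bt_succ, bt_zero, hlen0]; omega
  have hrs0 : brun len F 0 = q₀ := by
    rw [brun_eq len F hpos 0 0 le_rfl (by rw [hbt1]; omega)]
    show F 0 (0 - 0) = q₀
    rw [hF0, hρ₀0]
  have hsub : InfOcc (brun len F) ⊆ I := by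
    intro v hv
    obtain ⟨n, hn1, hn2⟩ := frequently_ge (brun len F) v hv T
    rw [← hn2]
    have hp1 : 1 ≤ bphase len n := le_bphase len hpos 1 n (by rw [hbt1]; omega)
    have hs1 : bt len (bphase len n) ≤ n := bphase_spec1 len n
    have hs2 : n < bt len (bphase len n + 1) := bphase_spec2 len hpos n
    have hbtS := bt_succ len (bphase len n)
    have hp0 : bphase len n ≠ 0 := by omega
    have hilt : n - bt len (bphase len n) < len (bphase len n) := by omega
    rw [hlenS _ hp0] at hilt
    show F (bphase len n) (n - bt len (bphase len n)) ∈ I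
    rcases lt_or_ge (n - bt len (bphase len n)) (k * bphase len n) with h' | h'
    · rw [hFc _ _ hp0 h']
      exact hc.2.2.1 _ (Nat.mod_lt _ hk0)
    · rw [hFd _ _ hp0 h']
      exact dmem _ (by omega)
  have hvocc : vs ∈ InfOcc (brun len F) := by
    show ∃ᶠ n in atTop, brun len F n = vs
    apply frequently_atTop.2
    intro N
    have hj1 : 1 ≤ max 1 N := le_max_left _ _
    have hjN : N ≤ max 1 N := le_max_right _ _
    have hi : k * max 1 N + ℓ₁ < len (max 1 N) := by rw [hlenS _ (by omega)]; omega
    refine ⟨bt len (max 1 N) + (k * max 1 N + ℓ₁), by have := le_bt len hpos (max 1 N); omega, ?_⟩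
    rw [brun_bt_add len F hpos _ _ hi, hFd _ _ (by omega) (by omega),
      show k * max 1 N + ℓ₁ - k * max 1 N = ℓ₁ from by omega, dℓ₁]
  have hcolInf : sInf (G.col '' InfOcc (brun len F)) = sInf (G.col '' I) := by
    apply le_antisymm
    · rw [← hvcol]
      exact Nat.sInf_le ⟨vs, hvocc, rfl⟩
    · apply le_csInf ((infOcc_nonempty (brun len F)).image G.col)
      rintro x ⟨v, hvmem, rfl⟩
      exact Nat.sInf_le ⟨v, hsub hvmem, rfl⟩
  have hpwrs : ParityWin G (brun len F) := by
    unfold ParityWin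
    rw [hcolInf]
    unfold ParityWin at hpw
    rwa [hInf] at hpw
  -- block sums
  have hcyc_sum : ∀ q : ℕ, ∑ i ∈ Finset.range (k*q), G.w (c (i % k)) (c (i % k + 1))
      = q * wSum G c k := by
    intro q
    induction q with
    | zero => simp
    | succ q ih =>
      rw [show k*(q+1) = k*q + k from by ring, Finset.sum_range_add, ih]
      have h2 : ∑ i ∈ Finset.range k, G.w (c ((k*q + i) % k)) (c ((k*q + i) % k + 1))
          = wSum G c k := by
        unfold wSum
        refine Finset.sum_congr rfl fun i hi => ?_
        rw [Finset.mem_range] at hi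
        rw [show k*q + i = i + k*q from by ring, Nat.add_mul_mod_self_left,
          Nat.mod_eq_of_lt hi]
      rw [h2]
      push_cast
      ring
  set wd := wSum G d L with hwd
  set e₁ := wd - m * L with he₁
  have hbsum : ∀ j, j ≠ 0 → wSum G (F j) (len j) = m * ((len j : ℕ) : ℝ) + e₁ := by
    intro j hj
    rw [hlenS j hj]
    have hsplit : wSum G (F j) (k*j + L) =
        (∑ i ∈ Finset.range (k*j), G.w (F j i) (F j (i+1)))
        + ∑ t ∈ Finset.range L, G.w (F j (k*j + t)) (F j (k*j + t + 1)) := by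
      unfold wSum
      rw [Finset.range_eq_Ico, ← Finset.sum_Ico_consecutive _ (Nat.zero_le (k*j))
        (by omega : k*j ≤ k*j + L), ← Finset.range_eq_Ico, Finset.sum_Ico_eq_sum_range]
      congr 1
      refine Finset.sum_congr (by congr 1; omega) fun t _ => rfl
    have h1 : ∑ i ∈ Finset.range (k*j), G.w (F j i) (F j (i+1)) = j * (m * k) := by
      rw [← hck, ← hcyc_sum j]
      refine Finset.sum_congr rfl fun i hi => ?_
      rw [Finset.mem_range] at hi
      rw [hFc j i hj hi, hFc1 j i hj (by omega)]
    have h2 : ∑ t ∈ Finset.range L, G.w (F j (k*j + t)) (F j (k*j + t + 1)) = wd := by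
      rw [hwd]
      unfold wSum
      refine Finset.sum_congr rfl fun t ht => ?_
      rw [Finset.mem_range] at ht
      rw [hFd j _ hj (by omega), hFd j _ hj (by omega),
        show k*j + t - k*j = t from by omega, show k*j + t + 1 - k*j = t + 1 from by omega]
    rw [hsplit, h1, h2, he₁]
    push_cast
    ring
  have hWlow : ∀ (f : ℕ → V) (t : ℕ), -(W * t) ≤ wSum G f t := by
    intro f t
    calc -(W * t) = ∑ _i ∈ Finset.range t, -W := by
          rw [Finset.sum_const, Finset.card_range, nsmul_eq_mul]; ring
    _ ≤ _ := Finset.sum_le_sum fun i _ => neg_le_of_abs_le (hW _ _)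
  have hbt_sum : ∀ p : ℕ, (bt len p : ℝ) = ∑ j ∈ Finset.range p, ((len j : ℕ) : ℝ) := by
    intro p
    induction p with
    | zero => simp [bt_zero]
    | succ p ih => rw [bt_succ, Finset.sum_range_succ, ← ih]; push_cast; ring
  have hbtq : ∀ p : ℕ, k * p * (p - 1) ≤ 2 * bt len p := by
    intro p
    induction p with
    | zero => simp
    | succ p ih =>
      rw [bt_succ]
      rcases Nat.eq_zero_or_pos p with hp | hp
      · subst hp; simp
      · have hlenp : k * p ≤ len p := by rw [hlenS p (by omega)]; omega
        have hqd : k * (p+1) * ((p+1) - 1) = k * p * (p - 1) + 2 * (k * p) := by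
          obtain ⟨q, rfl⟩ := Nat.exists_eq_succ_of_ne_zero (by omega : p ≠ 0)
          simp only [Nat.succ_sub_one, Nat.succ_eq_add_one]
          ring
        omega
  set s₀ := wSum G ρ₀ T with hs₀
  have hbs0 : wSum G (F 0) (len 0) = s₀ := by
    rw [hlen0, hs₀]
    unfold wSum
    exact Finset.sum_congr rfl fun i _ => by rw [hF0, hF0]
  set A := |s₀ - m * T| + |e₁| + (W + |m|) * L with hA
  set B := |e₁| + (W + |m|) * k with hB
  have hA0 : 0 ≤ A := by positivity
  have hB0 : 0 ≤ B := by positivity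
  have hkey : ∀ n, T ≤ n →
      m * n - (A + B * (bphase len n)) ≤ wSum G (brun len F) n := by
    intro n hn
    have hp1 : 1 ≤ bphase len n := le_bphase len hpos 1 n (by rw [hbt1]; omega)
    have hs1 : bt len (bphase len n) ≤ n := bphase_spec1 len n
    have hs2 : n < bt len (bphase len n + 1) := bphase_spec2 len hpos n
    have hbtS := bt_succ len (bphase len n)
    have hsum := brun_sum len F G hpos hmatch n
    have hIcoLen : ∑ j ∈ Finset.Ico 1 (bphase len n), ((len j : ℕ) : ℝ)
        = (bt len (bphase len n) : ℝ) - T := by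
      rw [hbt_sum, Finset.range_eq_Ico,
        ← Finset.sum_Ico_consecutive _ (Nat.zero_le 1) hp1, ← Finset.range_eq_Ico,
        Finset.sum_range_one, hlen0]
      ring
    have hblocks : ∑ j ∈ Finset.range (bphase len n), wSum G (F j) (len j)
        = s₀ + (m * ((bt len (bphase len n) : ℝ) - T) + ((bphase len n : ℝ) - 1) * e₁) := by
      rw [Finset.range_eq_Ico, ← Finset.sum_Ico_consecutive _ (Nat.zero_le 1) hp1,
        ← Finset.range_eq_Ico, Finset.sum_range_one, hbs0]
      have hmid : ∑ j ∈ Finset.Ico 1 (bphase len n), wSum G (F j) (len j)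
          = m * ((bt len (bphase len n) : ℝ) - T) + ((bphase len n : ℝ) - 1) * e₁ := by
        have hterm : ∑ j ∈ Finset.Ico 1 (bphase len n), wSum G (F j) (len j)
            = ∑ j ∈ Finset.Ico 1 (bphase len n), (m * ((len j : ℕ) : ℝ) + e₁) := by
          refine Finset.sum_congr rfl fun j hj => ?_
          rw [Finset.mem_Ico] at hj
          exact hbsum j (by omega)
        rw [hterm, Finset.sum_add_distrib, ← Finset.mul_sum, hIcoLen,
          Finset.sum_const, Nat.card_Ico, nsmul_eq_mul,
          Nat.cast_sub hp1]
        push_cast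
        ring
      rw [hmid]
    have hDr : ((n - bt len (bphase len n) : ℕ) : ℝ) = (n : ℝ) - (bt len (bphase len n) : ℝ) :=
      by rw [Nat.cast_sub hs1]
    have hD0 : (0:ℝ) ≤ ((n - bt len (bphase len n) : ℕ) : ℝ) := Nat.cast_nonneg _
    have hc2 : ((n - bt len (bphase len n) : ℕ) : ℝ)
        ≤ (k:ℝ) * (bphase len n : ℝ) + (L:ℝ) := by
      have hlenp : (n - bt len (bphase len n) : ℕ) ≤ k * bphase len n + L := by
        rw [← hlenS _ (by omega : bphase len n ≠ 0)]
        omega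
      exact_mod_cast hlenp
    have i1 := hWlow (F (bphase len n)) (n - bt len (bphase len n))
    have i2a : (m + W) * ((n - bt len (bphase len n) : ℕ) : ℝ)
        ≤ (|m| + W) * ((n - bt len (bphase len n) : ℕ) : ℝ) :=
      mul_le_mul_of_nonneg_right (by linarith [le_abs_self m]) hD0
    have i2b : (|m| + W) * ((n - bt len (bphase len n) : ℕ) : ℝ)
        ≤ (|m| + W) * ((k:ℝ) * (bphase len n : ℝ) + (L:ℝ)) :=
      mul_le_mul_of_nonneg_left hc2 (by positivity)
    have i3 : -((((bphase len n) : ℝ) - 1) * e₁) ≤ (((bphase len n) : ℝ) - 1) * |e₁| := by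
      have h0 : (0:ℝ) ≤ ((bphase len n : ℝ) - 1) := by
        have : (1:ℝ) ≤ (bphase len n : ℝ) := by exact_mod_cast hp1
        linarith
      calc -((((bphase len n) : ℝ) - 1) * e₁) = (((bphase len n) : ℝ) - 1) * (-e₁) := by ring
      _ ≤ (((bphase len n) : ℝ) - 1) * |e₁| :=
          mul_le_mul_of_nonneg_left (neg_le_abs e₁) h0
    have i4 : (((bphase len n) : ℝ) - 1) * |e₁| ≤ ((bphase len n) : ℝ) * |e₁| :=
      mul_le_mul_of_nonneg_right (by linarith) (abs_nonneg _)
    have i5 : -(s₀ - m * T) ≤ |s₀ - m * T| := neg_le_abs _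
    rw [hsum, hblocks, hA, hB]
    have hneq2 : m * (n : ℝ) = m * (bt len (bphase len n) : ℝ)
        + m * ((n - bt len (bphase len n) : ℕ) : ℝ) := by rw [hDr]; ring
    linarith [i1, i2a, i2b, i3, i4, i5, hneq2]
  have hlim : (m : EReal) ≤ payoff G (brun len F) := by
    unfold payoff
    rw [if_pos hpwrs]
    apply EReal_coe_le_of_forall
    intro ε hε
    obtain ⟨p₀, hp₀1, hp₀⟩ := eventually_quad A B ε hA0 hB0 hε k hk0
    apply le_liminf_of_eventually
    rw [eventually_atTop]
    refine ⟨max T (bt len p₀), fun n hn => ?_⟩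
    have hnT : T ≤ n := le_trans (le_max_left _ _) hn
    have hnp₀ : bt len p₀ ≤ n := le_trans (le_max_right _ _) hn
    have hpp : p₀ ≤ bphase len n := le_bphase len hpos p₀ n hnp₀
    have hkeyn := hkey n hnT
    have hquad := hp₀ _ hpp
    have hp1 : 1 ≤ bphase len n := by omega
    have hbtp : (k:ℝ) * (bphase len n : ℝ) * ((bphase len n : ℝ) - 1)
        ≤ 2 * (bt len (bphase len n) : ℝ) := by
      have hq := hbtq (bphase len n)
      have hcast : ((k * bphase len n * (bphase len n - 1) : ℕ) : ℝ)
          = (k:ℝ) * (bphase len n : ℝ) * ((bphase len n : ℝ) - 1) := by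
        push_cast [Nat.cast_sub hp1]
        ring
      calc (k:ℝ) * (bphase len n : ℝ) * ((bphase len n : ℝ) - 1)
          = ((k * bphase len n * (bphase len n - 1) : ℕ) : ℝ) := hcast.symm
      _ ≤ ((2 * bt len (bphase len n) : ℕ) : ℝ) := by exact_mod_cast hq
      _ = 2 * (bt len (bphase len n) : ℝ) := by push_cast; ring
    have hbtn : (bt len (bphase len n) : ℝ) ≤ (n:ℝ) := by
      exact_mod_cast bphase_spec1 len n
    have hABε : A + B * (bphase len n : ℝ) ≤ ε * n := by
      calc A + B * (bphase len n : ℝ)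
          ≤ ε * ((k:ℝ) * (bphase len n : ℝ) * ((bphase len n : ℝ) - 1)) / 2 := hquad
      _ ≤ ε * (bt len (bphase len n) : ℝ) := by
          have := mul_le_mul_of_nonneg_left hbtp hε.le
          linarith
      _ ≤ ε * n := mul_le_mul_of_nonneg_left hbtn hε.le
    have hn1 : (1:ℝ) ≤ (n:ℝ) := by exact_mod_cast (show 1 ≤ n from by omega)
    have hn0 : (0:ℝ) < n := by linarith
    rw [avgW_eq, le_div_iff₀ hn0]
    linarith [hkeyn, hABε]
  have hSm : S ≤ (m : EReal) := by
    rw [← hgI]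
    simp only [hg]
    apply iSup_le
    rintro ⟨⟨ρ', hP', h0'⟩, hI'⟩
    simp only at hI'
    exact payoff_le G I m W hW hcub Lb hLb ρ' hP' hI'.le
  exact ⟨⟨brun len F, hrsP, hrs0⟩, le_antisymm (hle _) (le_trans hSm hlim)⟩

end MPP
/-- in a one-player game (all states belong to Player 1),
Player 1 has an optimal strategy: the supremum over strategies is attained. -/
theorem exists_optimal_strategy_one_player {V : Type} [Fintype V] (G : Game V)
    (h1 : ∀ v, G.isP1 v) (hsucc : ∀ v, ∃ u, G.E v u) (q₀ : V) :
    ∃ σ : Strat1 G, val1 G σ q₀ = lowVal G q₀ := by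
  obtain ⟨⟨ρ, hρP, hρ0⟩, hopt⟩ := MPP.exists_optimal_play G hsucc q₀
  refine ⟨MPP.stratOf G hsucc ρ hρP, ?_⟩
  rw [MPP.val1_eq_payoff G h1 _ q₀, MPP.lowVal_eq G h1 hsucc q₀]
  have hpl := MPP.playOf_stratOf G h1 hsucc ρ hρP
  rw [hρ0] at hpl
  rw [hpl]
  exact hopt
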